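/- Let ℓ ≥ 1 and k ≥ 1 be integers, let α = (α_1, …, α_k), β = (β_1, …, β_k) be complex numbers with β_i ≠ 0 and α_i/β_i a positive real number for each i, and α_i·β_j - β_i·α_j ≠ 0 for all 1 ≤ i < j ≤ k, and let r = (r_1, …, r_k) be positive real numbers that are pairwise distinct. Define the k×k complex matrix B by B_{ij} = (α_i + r_j·β_i)^{ℓ-1}. Then B is invertible if and only if k ≤ ℓ. -/

import Mathlib

open Set Finset

lemma cheb_key : ∀ (k n : ℕ), k ≤ n + 1 → ∀ (r t : Fin k → ℝ), (∀ j, 0 < r j) →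
    Function.Injective r → (∀ i, 0 < t i) → StrictMono t →
    ∀ c : Fin k → ℝ, (∀ i, ∑ j, c j * (t i + r j) ^ n = 0) → c = 0 := by
  intro k
  induction k with
  | zero => intro n _ r t _ _ _ _ c _; funext i; exact i.elim0
  | succ k ih =>
    intro n hkn r t hr hrinj ht hts c hc
    have hcs : ∀ j : Fin k, c j.succ = 0 := by
      rcases Nat.eq_zero_or_pos k with hk0 | hk0
      · subst hk0; exact fun j => j.elim0
      have hn : 1 ≤ n := by omega
      set p : ℝ → ℝ := fun x => ∑ j, c j * (x + r j) ^ n with hp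
      have hpd : ∀ x : ℝ, HasDerivAt p (∑ j, c j * (n * (x + r j) ^ (n - 1))) x := by
        intro x
        apply HasDerivAt.fun_sum
        intro j _
        have h1 : HasDerivAt (fun x : ℝ => (x + r j) ^ n)
            ((n : ℝ) * (x + r j) ^ (n - 1) * 1) x :=
          HasDerivAt.fun_pow ((hasDerivAt_id x).add_const (r j)) n
        simpa [mul_comm, mul_assoc, mul_left_comm] using h1.const_mul (c j)
      have hpow : ∀ y : ℝ, y ^ n = y ^ (n - 1) * y := by
        intro y; conv_lhs => rw [show n = (n - 1) + 1 by omega]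
        rw [pow_succ]
      have key1 : ∀ i : Fin k, ∃ s, t i.castSucc < s ∧ s < t i.succ ∧
          ∑ j : Fin k, (n * c j.succ * (r 0 - r j.succ)) * (s + r j.succ) ^ (n - 1) = 0 := by
        intro i
        have hlt : t i.castSucc < t i.succ := hts (Fin.castSucc_lt_succ : i.castSucc < i.succ)
        set q : ℝ → ℝ := fun x => p x / (x + r 0) ^ n with hq
        have hpc : Continuous p := by
          apply continuous_finset_sum
          intro j _
          exact (continuous_const.mul ((continuous_id.add continuous_const).pow n))
        have hcont : ContinuousOn q (Icc (t i.castSucc) (t i.succ)) := by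
          apply ContinuousOn.div hpc.continuousOn
          · exact ((continuous_id.add continuous_const).pow n).continuousOn
          · intro x hx
            have : 0 < x + r 0 := by
              have := ht i.castSucc
              have := hr 0
              have := hx.1
              linarith
            positivity
        have hqI : q (t i.castSucc) = q (t i.succ) := by
          have e1 : p (t i.castSucc) = 0 := hc i.castSucc
          have e2 : p (t i.succ) = 0 := hc i.succ
          simp only [hq, e1, e2, zero_div]
        obtain ⟨s, hs, hds⟩ := exists_deriv_eq_zero hlt hcont hqI
        refine ⟨s, hs.1, hs.2, ?_⟩
        have hs0 : (0 : ℝ) < s := lt_trans (ht _) hs.1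
        have hsr : (0 : ℝ) < s + r 0 := by have := hr 0; linarith
        have hgd : HasDerivAt (fun x : ℝ => (x + r 0) ^ n)
            ((n : ℝ) * (s + r 0) ^ (n - 1) * 1) s :=
          HasDerivAt.fun_pow ((hasDerivAt_id s).add_const (r 0)) n
        have hqd := (hpd s).div hgd (pow_ne_zero n hsr.ne')
        have h0 : ((∑ j, c j * (n * (s + r j) ^ (n - 1))) * (s + r 0) ^ n -
            p s * ((n : ℝ) * (s + r 0) ^ (n - 1) * 1)) / ((s + r 0) ^ n) ^ 2 = 0 := by
          rw [← hqd.deriv]; exact hds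
        have hnum : (∑ j, c j * (n * (s + r j) ^ (n - 1))) * (s + r 0) ^ n =
            p s * ((n : ℝ) * (s + r 0) ^ (n - 1)) := by
          have h2 := (div_eq_zero_iff.mp h0).resolve_right
            (by positivity)
          linarith [h2]
        -- cancel (s + r 0) ^ (n-1)
        have hkey : (∑ j, c j * (n * (s + r j) ^ (n - 1))) * (s + r 0) = (n : ℝ) * p s := by
          have h3 : ((∑ j, c j * (n * (s + r j) ^ (n - 1))) * (s + r 0)) * (s + r 0) ^ (n - 1)
              = ((n : ℝ) * p s) * (s + r 0) ^ (n - 1) := by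
            rw [hpow (s + r 0)] at hnum
            ring_nf
            ring_nf at hnum
            linarith [hnum]
          exact mul_right_cancel₀ (pow_ne_zero _ hsr.ne') h3
        -- rearrange into the target sum
        have hT : ∑ j : Fin (k+1), (n * c j * (r 0 - r j)) * (s + r j) ^ (n - 1)
            = (∑ j, c j * (n * (s + r j) ^ (n - 1))) * (s + r 0) - (n : ℝ) * p s := by
          simp only [hp, Finset.sum_mul, Finset.mul_sum, ← Finset.sum_sub_distrib]
          apply Finset.sum_congr rfl
          intro j _
          rw [hpow (s + r j)]
          ring
        rw [hkey, sub_self] at hT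
        rw [Fin.sum_univ_succ] at hT
        simpa using hT
      choose s hs1 hs2 hsum using key1
      have hsmono : StrictMono s := by
        intro i i' hii'
        calc s i < t i.succ := hs2 i
          _ ≤ t i'.castSucc := hts.monotone (by
              rw [Fin.le_def]
              have : (i : ℕ) < (i' : ℕ) := hii'
              simpa using this)
          _ < s i' := hs1 i'
      have hspos : ∀ i, 0 < s i := fun i => lt_trans (ht _) (hs1 i)
      have hz := ih (n - 1) (by omega) (r ∘ Fin.succ) s (fun j => hr _)
        (fun a b hab => Fin.succ_injective _ (hrinj hab)) hspos hsmono
        (fun j => n * c j.succ * (r 0 - r j.succ)) hsum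
      intro j
      have hj := congrFun hz j
      simp only [Pi.zero_apply] at hj
      have hr0 : r 0 ≠ r j.succ := fun h => (Fin.succ_ne_zero j).symm (hrinj h)
      have hnn : (n : ℝ) ≠ 0 := by positivity
      have : c j.succ = 0 := by
        rcases mul_eq_zero.mp hj with h | h
        · rcases mul_eq_zero.mp h with h' | h'
          · exact absurd h' hnn
          · exact h'
        · exact absurd (sub_eq_zero.mp h) hr0
      exact this
    have hc0 : c 0 = 0 := by
      have h := hc 0
      rw [Fin.sum_univ_succ] at h
      simp only [hcs, zero_mul, Finset.sum_const_zero, add_zero] at h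
      have hpos : (0 : ℝ) < (t 0 + r 0) ^ n := by
        have := ht 0; have := hr 0; positivity
      exact (mul_eq_zero.mp h).resolve_right hpos.ne'
    funext i
    induction i using Fin.cases with
    | zero => exact hc0
    | succ j => exact hcs j

theorem matB_invertible_iff (ℓ k : ℕ) (hℓ : 1 ≤ ℓ) (hk : 1 ≤ k)
    (α β : Fin k → ℂ) (hβ : ∀ i, β i ≠ 0)
    (hpos : ∀ i, ∃ t : ℝ, 0 < t ∧ α i / β i = (t : ℂ))
    (hαβ : ∀ i j : Fin k, i < j → α i * β j - β i * α j ≠ 0)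
    (r : Fin k → ℝ) (hr : ∀ i, 0 < r i) (hinj : Function.Injective r) :
    IsUnit (Matrix.of fun i j : Fin k => (α i + (r j : ℂ) * β i) ^ (ℓ - 1)) ↔ k ≤ ℓ := by
  constructor
  · intro hu
    by_contra hkl
    push_neg at hkl
    set n := ℓ - 1 with hn
    have hn1 : n + 1 = ℓ := by omega
    set C : Matrix (Fin k) (Fin ℓ) ℂ :=
      Matrix.of fun i m => (n.choose m : ℂ) * β i ^ (m : ℕ) * α i ^ (n - (m : ℕ)) with hC
    set V : Matrix (Fin ℓ) (Fin k) ℂ := Matrix.of fun m j => (r j : ℂ) ^ (m : ℕ) with hV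
    have hfac : (Matrix.of fun i j : Fin k => (α i + (r j : ℂ) * β i) ^ (ℓ - 1)) = C * V := by
      ext i j
      simp only [Matrix.of_apply, Matrix.mul_apply, hC, hV]
      rw [add_comm (α i), add_pow,
        show Finset.range (n + 1) = Finset.range ℓ by rw [hn1],
        ← Fin.sum_univ_eq_sum_range
        (fun m => ((r j : ℂ) * β i) ^ m * α i ^ (n - m) * (n.choose m : ℂ)) ℓ]
      apply Finset.sum_congr rfl
      intro m _
      rw [mul_pow]
      ring
    rw [hfac] at hu
    have h1 := Matrix.rank_of_isUnit _ hu
    have h2 : (C * V).rank ≤ ℓ := le_trans (Matrix.rank_mul_le_left C V)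
      (le_trans C.rank_le_card_width (by simp))
    rw [h1] at h2
    simp at h2
    omega
  · intro hkl
    set n := ℓ - 1 with hn
    choose t htpos hdiv using hpos
    have hαt : ∀ i, α i = β i * (t i : ℂ) := by
      intro i
      have := hdiv i
      rw [div_eq_iff (hβ i)] at this
      rw [this]; ring
    have htinj : Function.Injective t := by
      intro i j hij
      by_contra hne
      rcases lt_or_gt_of_ne hne with h | h
      · apply hαβ i j h
        rw [hαt i, hαt j, hij]; ring
      · apply hαβ j i h
        rw [hαt i, hαt j, hij]; ring
    set M : Matrix (Fin k) (Fin k) ℝ := Matrix.of fun i j => (t i + r j) ^ n with hM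
    have hB : (Matrix.of fun i j : Fin k => (α i + (r j : ℂ) * β i) ^ (ℓ - 1)) =
        Matrix.diagonal (fun i => β i ^ n) * M.map Complex.ofReal := by
      ext i j
      rw [Matrix.mul_apply]
      simp only [Matrix.of_apply, Matrix.diagonal_apply, Matrix.map_apply, hM, Matrix.of_apply]
      rw [Finset.sum_eq_single i (by intro b _ hb; simp [hb.symm]) (by simp)]
      simp only [if_pos rfl]
      rw [hαt i, show β i * (t i : ℂ) + (r j : ℂ) * β i = β i * ((t i : ℂ) + (r j : ℂ)) by ring,
        mul_pow]
      push_cast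
      rfl
    rw [hB]
    apply IsUnit.mul
    · rw [Matrix.isUnit_iff_isUnit_det, Matrix.det_diagonal, isUnit_iff_ne_zero]
      exact Finset.prod_ne_zero_iff.mpr fun i _ => pow_ne_zero n (hβ i)
    · rw [Matrix.isUnit_iff_isUnit_det]
      have hdet : (M.map Complex.ofReal).det = ((M.det : ℝ) : ℂ) := by
        rw [show M.map Complex.ofReal = Complex.ofRealHom.mapMatrix M from rfl,
          ← RingHom.map_det Complex.ofRealHom M]
        rfl
      rw [hdet, isUnit_iff_ne_zero]
      simp only [ne_eq, Complex.ofReal_eq_zero]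
      intro h0
      obtain ⟨v, hv0, hMv⟩ := (Matrix.exists_mulVec_eq_zero_iff).mpr h0
      set σ := Tuple.sort t with hσ
      have hts : StrictMono (t ∘ σ) :=
        (Tuple.monotone_sort t).strictMono_of_injective (htinj.comp σ.injective)
      have hsum : ∀ i : Fin k, ∑ j, v j * ((t ∘ σ) i + r j) ^ n = 0 := by
        intro i
        have := congrFun hMv (σ i)
        rw [Matrix.mulVec, dotProduct] at this
        simp only [hM, Matrix.of_apply, Pi.zero_apply] at this
        rw [← this]
        apply Finset.sum_congr rfl
        intro j _
        simp [mul_comm]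
      have := cheb_key k n (by omega) r (t ∘ σ) hr hinj (fun i => htpos _) hts v hsum
      exact hv0 this
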